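/- Define a sequence of symmetric polynomials f_m in three variables by the generating function ∏_{i=1}^3 (1 - 2x_i t)^{-1} · ∏_{1≤i<j≤3} (1 - (x_i + x_j)t)^{-1} = ∑_{m≥0} f_m t^m. Then f_0 = 1, f_1 = 4 s_1, f_2 = 11 s_2 + 6 s_{1,1}, and for m ≥ 3 the recursion f_m = 2 s_1 · f_{m-1} - (s_2 + 2 s_{1,1}) · f_{m-2} + s_{2,1} · f_{m-3} + 2^m · s_m holds, where s_λ denotes the Schur polynomial in three variables for the partition λ and s_m = h_m is the complete homogeneous symmetric polynomial of degree m. -/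

import Mathlib

open MvPolynomial

/-- Ring of polynomials in three variables over `ℚ`. -/
noncomputable abbrev R3 : Type := MvPolynomial (Fin 3) ℚ

/-- Complete homogeneous symmetric polynomial of degree `m` in three variables;
this is also the single-row Schur polynomial `s_m`. -/
noncomputable def h3 (m : ℕ) : R3 :=
  ∑ s ∈ (Finset.univ : Finset (Fin 3)).sym m, ((s : Multiset (Fin 3)).map MvPolynomial.X).prod

/-- The Schur polynomial `s₁ = e₁`. -/
noncomputable def s1 : R3 := esymm (Fin 3) ℚ 1
/-- The Schur polynomial `s₁,₁ = e₂`. -/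
noncomputable def s11 : R3 := esymm (Fin 3) ℚ 2
/-- The Schur polynomial `s₂ = h₂`. -/
noncomputable def s2 : R3 := h3 2
/-- The Schur polynomial `s₂,₁ = e₁e₂ - e₃`. -/
noncomputable def s21 : R3 := esymm (Fin 3) ℚ 1 * esymm (Fin 3) ℚ 2 - esymm (Fin 3) ℚ 3

lemma card_count (s : Multiset (Fin 3)) :
    Multiset.card s = s.count 0 + s.count 1 + s.count 2 := by
  induction s using Multiset.induction with
  | empty => simp
  | cons a t ih => fin_cases a <;> simp [Multiset.count_cons, ih] <;> ring

lemma prod_map_eq (m : Multiset (Fin 3)) :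
    (m.map X).prod = (X 0 : R3) ^ m.count 0 * X 1 ^ m.count 1 * X 2 ^ m.count 2 := by
  have h : m = Multiset.replicate (m.count 0) 0 + Multiset.replicate (m.count 1) 1
      + Multiset.replicate (m.count 2) 2 := by
    ext j; fin_cases j <;> simp [Multiset.count_replicate]
  conv_lhs => rw [h]
  simp [Multiset.prod_replicate, mul_assoc]

lemma h3_eq (n : ℕ) : h3 n = ∑ p ∈ Finset.HasAntidiagonal.antidiagonal n, ∑ q ∈ Finset.HasAntidiagonal.antidiagonal p.2,
    (X 0 : R3) ^ p.1 * X 1 ^ q.1 * X 2 ^ q.2 := by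
  rw [h3, Finset.sum_sigma']
  refine Finset.sum_bij' (fun s _ => ⟨(Multiset.count 0 s.1, Multiset.count 1 s.1 + Multiset.count 2 s.1),
      (Multiset.count 1 s.1, Multiset.count 2 s.1)⟩)
    (fun x hx => ⟨Multiset.replicate x.1.1 0 + Multiset.replicate x.2.1 1 + Multiset.replicate x.2.2 2, ?_⟩)
    ?_ ?_ ?_ ?_ ?_
  · have hx' := Finset.mem_sigma.mp hx
    have h1 := Finset.HasAntidiagonal.mem_antidiagonal.mp hx'.1
    have h2 := Finset.HasAntidiagonal.mem_antidiagonal.mp hx'.2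
    simp only [Multiset.card_add, Multiset.card_replicate]
    omega
  · intro s hs
    simp only [Finset.mem_sigma, Finset.HasAntidiagonal.mem_antidiagonal]
    constructor
    · have := s.2
      have := card_count s.1
      omega
    · trivial
  · intro x hx
    exact Finset.mem_sym_iff.mpr fun a _ => Finset.mem_univ a
  · intro s hs
    apply Subtype.ext
    ext j
    fin_cases j <;> simp [Multiset.count_replicate]
  · intro x hx
    have hx' := Finset.mem_sigma.mp hx
    have h2 := Finset.HasAntidiagonal.mem_antidiagonal.mp hx'.2
    obtain ⟨⟨a, b⟩, c, d⟩ := x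
    simp only at h2
    subst h2
    simp [Multiset.count_replicate]
  · intro s hs
    exact prod_map_eq s.1

lemma h3_zero : h3 0 = 1 := by
  rw [h3_eq]; simp

lemma h3_one : h3 1 = X 0 + X 1 + X 2 := by
  rw [h3_eq, Finset.Nat.sum_antidiagonal_eq_sum_range_succ_mk]
  simp [Finset.sum_range_succ, Finset.Nat.sum_antidiagonal_eq_sum_range_succ_mk]
  ring

lemma h3_two : h3 2 = X 0 ^ 2 + X 1 ^ 2 + X 2 ^ 2 + X 0 * X 1 + X 0 * X 2 + X 1 * X 2 := by
  rw [h3_eq, Finset.Nat.sum_antidiagonal_eq_sum_range_succ_mk]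
  simp [Finset.sum_range_succ, Finset.Nat.sum_antidiagonal_eq_sum_range_succ_mk]
  ring

lemma e1_eq : esymm (Fin 3) ℚ 1 = X 0 + X 1 + X 2 := by
  rw [esymm_one, Fin.sum_univ_three]

lemma e2_eq : esymm (Fin 3) ℚ 2 = X 0 * X 1 + X 0 * X 2 + X 1 * X 2 := by
  have h : (Finset.univ : Finset (Fin 3)).powersetCard 2 = {{0, 1}, {0, 2}, {1, 2}} := by decide
  rw [esymm, h]
  rw [Finset.sum_insert (by decide), Finset.sum_insert (by decide), Finset.sum_singleton,
    Finset.prod_pair (by decide), Finset.prod_pair (by decide), Finset.prod_pair (by decide)]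
  ring

lemma e3_eq : esymm (Fin 3) ℚ 3 = X 0 * (X 1 * X 2) := by
  have h : (Finset.univ : Finset (Fin 3)).powersetCard 3 = {{0, 1, 2}} := by decide
  rw [esymm, h, Finset.sum_singleton, Finset.prod_insert (by decide),
    Finset.prod_pair (by decide)]

lemma geom (a : R3) :
    PowerSeries.mk (fun m => a ^ m) * (1 - PowerSeries.C (R := R3) a * PowerSeries.X) = 1 := by
  ext n
  cases n with
  | zero => simp
  | succ k =>
    have h : PowerSeries.mk (fun m => a ^ m) * (PowerSeries.C (R := R3) a * PowerSeries.X)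
        = (PowerSeries.mk (fun m => a ^ m) * PowerSeries.C (R := R3) a) * PowerSeries.X := by ring
    rw [mul_sub, mul_one, map_sub, h, PowerSeries.coeff_succ_mul_X, PowerSeries.coeff_mul_C,
      PowerSeries.coeff_mk, PowerSeries.coeff_mk]
    simp [pow_succ]

lemma Smul : (PowerSeries.mk fun m => (2 : R3) ^ m * h3 m)
    = (PowerSeries.mk fun m => ((2 : R3) * X 0) ^ m)
      * ((PowerSeries.mk fun m => ((2 : R3) * X 1) ^ m)
        * (PowerSeries.mk fun m => ((2 : R3) * X 2) ^ m)) := by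
  refine PowerSeries.ext fun n => ?_
  rw [PowerSeries.coeff_mul]
  simp_rw [PowerSeries.coeff_mul, PowerSeries.coeff_mk]
  rw [h3_eq, Finset.mul_sum]
  refine Finset.sum_congr rfl fun p hp => ?_
  rw [Finset.mul_sum, Finset.mul_sum]
  refine Finset.sum_congr rfl fun q hq => ?_
  have hp' := Finset.HasAntidiagonal.mem_antidiagonal.mp hp
  have hq' := Finset.HasAntidiagonal.mem_antidiagonal.mp hq
  rw [mul_pow, mul_pow, mul_pow, ← hp', ← hq', pow_add, pow_add]
  ring

lemma SA : (PowerSeries.mk fun m => (2 : R3) ^ m * h3 m) *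
    ((1 - 2 * PowerSeries.C (R := R3) (X 0) * PowerSeries.X) *
     (1 - 2 * PowerSeries.C (R := R3) (X 1) * PowerSeries.X) *
     (1 - 2 * PowerSeries.C (R := R3) (X 2) * PowerSeries.X)) = 1 := by
  have e : ∀ i : Fin 3, (2 : PowerSeries R3) * PowerSeries.C (R := R3) (X i) = PowerSeries.C (R := R3) (2 * X i) := by
    intro i; rw [map_mul, map_ofNat]
  rw [Smul, e 0, e 1, e 2]
  have h : ∀ a : R3, (PowerSeries.mk fun m => a ^ m) * (1 - PowerSeries.C (R := R3) a * PowerSeries.X) = 1 :=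
    geom
  calc (PowerSeries.mk fun m => ((2:R3) * X 0) ^ m)
      * ((PowerSeries.mk fun m => ((2:R3) * X 1) ^ m) * (PowerSeries.mk fun m => ((2:R3) * X 2) ^ m)) *
      ((1 - PowerSeries.C (R := R3) (2 * X 0) * PowerSeries.X) *
       (1 - PowerSeries.C (R := R3) (2 * X 1) * PowerSeries.X) *
       (1 - PowerSeries.C (R := R3) (2 * X 2) * PowerSeries.X))
      = ((PowerSeries.mk fun m => ((2:R3) * X 0) ^ m) * (1 - PowerSeries.C (R := R3) (2 * X 0) * PowerSeries.X))
        * (((PowerSeries.mk fun m => ((2:R3) * X 1) ^ m) * (1 - PowerSeries.C (R := R3) (2 * X 1) * PowerSeries.X))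
        * ((PowerSeries.mk fun m => ((2:R3) * X 2) ^ m) * (1 - PowerSeries.C (R := R3) (2 * X 2) * PowerSeries.X))) := by
        ring
    _ = 1 := by rw [h, h, h]; simp

lemma coeff_aux (f : ℕ → R3) (a : R3) (k n : ℕ) :
    PowerSeries.coeff (R := R3) n (PowerSeries.mk f * (PowerSeries.C (R := R3) a * PowerSeries.X ^ k))
      = if k ≤ n then a * f (n - k) else 0 := by
  rw [show PowerSeries.mk f * (PowerSeries.C (R := R3) a * PowerSeries.X ^ k)
      = (PowerSeries.mk f * PowerSeries.C (R := R3) a) * PowerSeries.X ^ k from by ring,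
    PowerSeries.coeff_mul_X_pow', PowerSeries.coeff_mul_C, PowerSeries.coeff_mk]
  split
  · ring
  · rfl

theorem genfun_recursion (f : ℕ → R3)
    (hf : PowerSeries.mk f *
        ((1 - 2 * PowerSeries.C (R := R3) (MvPolynomial.X 0) * PowerSeries.X) *
         (1 - 2 * PowerSeries.C (R := R3) (MvPolynomial.X 1) * PowerSeries.X) *
         (1 - 2 * PowerSeries.C (R := R3) (MvPolynomial.X 2) * PowerSeries.X) *
         (1 - PowerSeries.C (R := R3) (MvPolynomial.X 0 + MvPolynomial.X 1) * PowerSeries.X) *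
         (1 - PowerSeries.C (R := R3) (MvPolynomial.X 0 + MvPolynomial.X 2) * PowerSeries.X) *
         (1 - PowerSeries.C (R := R3) (MvPolynomial.X 1 + MvPolynomial.X 2) * PowerSeries.X)) = 1) :
    f 0 = 1 ∧ f 1 = 4 * s1 ∧ f 2 = 11 * s2 + 6 * s11 ∧
      ∀ m : ℕ, 3 ≤ m →
        f m = 2 * s1 * f (m - 1) - (s2 + 2 * s11) * f (m - 2)
          + s21 * f (m - 3) + 2 ^ m * h3 m := by
  set u : R3 := X 0 + X 1 with hu
  set v : R3 := X 0 + X 2 with hv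
  set w : R3 := X 1 + X 2 with hw
  set S : PowerSeries R3 := PowerSeries.mk fun m => (2 : R3) ^ m * h3 m with hS
  set B : PowerSeries R3 := (1 - PowerSeries.C (R := R3) u * PowerSeries.X) *
      (1 - PowerSeries.C (R := R3) v * PowerSeries.X) * (1 - PowerSeries.C (R := R3) w * PowerSeries.X) with hBdef
  set A : PowerSeries R3 := (1 - 2 * PowerSeries.C (R := R3) (X 0) * PowerSeries.X) *
      (1 - 2 * PowerSeries.C (R := R3) (X 1) * PowerSeries.X) *
      (1 - 2 * PowerSeries.C (R := R3) (X 2) * PowerSeries.X) with hAdef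
  have h1 : (PowerSeries.mk f * B) * A = 1 := by rw [← hf]; ring
  have hfB : PowerSeries.mk f * B = S := by
    calc PowerSeries.mk f * B = PowerSeries.mk f * B * (S * A) := by rw [SA, mul_one]
      _ = S * (PowerSeries.mk f * B * A) := by ring
      _ = S := by rw [h1, mul_one]
  have hBexp : PowerSeries.mk f * B = PowerSeries.mk f
      - PowerSeries.mk f * (PowerSeries.C (R := R3) (u + v + w) * PowerSeries.X ^ 1)
      + PowerSeries.mk f * (PowerSeries.C (R := R3) (u*v + u*w + v*w) * PowerSeries.X ^ 2)
      - PowerSeries.mk f * (PowerSeries.C (R := R3) (u*v*w) * PowerSeries.X ^ 3) := by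
    rw [hBdef]
    simp only [map_add, map_mul]
    ring
  have key : ∀ n : ℕ, f n - (if 1 ≤ n then (u + v + w) * f (n - 1) else 0)
      + (if 2 ≤ n then (u*v + u*w + v*w) * f (n - 2) else 0)
      - (if 3 ≤ n then (u*v*w) * f (n - 3) else 0) = 2 ^ n * h3 n := by
    intro n
    have h2 := congrArg (PowerSeries.coeff (R := R3) n) hfB
    rw [hBexp, map_sub, map_add, map_sub, coeff_aux, coeff_aux, coeff_aux,
      PowerSeries.coeff_mk, hS, PowerSeries.coeff_mk] at h2
    exact h2
  have hf0 : f 0 = 1 := by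
    have h := key 0
    simp [h3_zero] at h
    exact h
  have hf1 : f 1 = 4 * s1 := by
    have h := key 1
    norm_num [h3_one, hf0] at h
    rw [s1, e1_eq, hu, hv, hw] at *
    linear_combination h
  have hf2 : f 2 = 11 * s2 + 6 * s11 := by
    have h := key 2
    norm_num [h3_two, hf0, hf1] at h
    rw [s1, e1_eq] at h
    rw [s2, s11, h3_two, e2_eq, hu, hv, hw] at *
    linear_combination h
  refine ⟨hf0, hf1, hf2, fun m hm => ?_⟩
  have h := key m
  rw [if_pos (by omega), if_pos (by omega), if_pos (by omega)] at h
  rw [s1, s2, s11, s21, e1_eq, e2_eq, e3_eq, h3_two, hu, hv, hw] at *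
  linear_combination h
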